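/- Let A be a unital C*-algebra, α an endomorphism of A, and L a transfer operator for α (i.e., L is positive linear and L(aα(b)) = L(a)b for all a, b ∈ A) with L(1) = 1. Then (α, L) is an interaction over A: αLα = α, LαL = L, α(xy) = α(x)α(y) if x or y ∈ L(A), and L(xy) = L(x)L(y) if x or y ∈ α(A). -/
import Mathlib

lemma star_map_of_pos
    {A : Type*} [CStarAlgebra A] [PartialOrder A] [StarOrderedRing A]
    (L : A →L[ℂ] A) (hLpos : ∀ a : A, 0 ≤ a → 0 ≤ L a) (x : A) :
    L (star x) = star (L x) := by
  have hx : x ∈ Submodule.span ℂ {a : A | 0 ≤ a} := by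
    rw [CStarAlgebra.span_nonneg]; trivial
  induction hx using Submodule.span_induction with
  | mem a ha =>
      have h1 : star a = a := IsSelfAdjoint.star_eq ha.isSelfAdjoint
      have h2 : star (L a) = L a := IsSelfAdjoint.star_eq (hLpos a ha).isSelfAdjoint
      rw [h1, h2]
  | zero => simp
  | add a b _ _ ha hb => rw [star_add, map_add, map_add, star_add, ha, hb]
  | smul c a _ ha => rw [star_smul, map_smul, map_smul, star_smul, ha]

/-- Let `A` be a unital C*-algebra, `α` an endomorphism of `A`, and `L` a transfer
operator for `α` (a positive linear map with `L(a α(b)) = L(a) b`) with `L(1) = 1`.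
Then `(α, L)` is an interaction over `A`: `αLα = α`, `LαL = L`, `α(xy) = α(x)α(y)`
if `x` or `y` lies in `L(A)`, and `L(xy) = L(x)L(y)` if `x` or `y` lies in `α(A)`. -/
theorem stmt10
    {A : Type*} [CStarAlgebra A] [PartialOrder A] [StarOrderedRing A]
    (α : A →⋆ₐ[ℂ] A) (L : A →L[ℂ] A)
    (hLpos : ∀ a : A, 0 ≤ a → 0 ≤ L a)
    (hTrans : ∀ a b : A, L (a * α b) = L a * b)
    (hL1 : L 1 = 1) :
    (∀ a : A, α (L (α a)) = α a) ∧
    (∀ a : A, L (α (L a)) = L a) ∧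
    (∀ x y : A, (x ∈ Set.range L ∨ y ∈ Set.range L) → α (x * y) = α x * α y) ∧
    (∀ x y : A, (x ∈ Set.range α ∨ y ∈ Set.range α) → L (x * y) = L x * L y) := by
  have hLα : ∀ a : A, L (α a) = a := by
    intro a
    have := hTrans 1 a
    simpa [hL1] using this
  have hstar : ∀ x : A, L (star x) = star (L x) := star_map_of_pos L hLpos
  refine ⟨fun a => by rw [hLα], fun a => by rw [hLα], fun x y _ => map_mul α x y, ?_⟩
  rintro x y (⟨a, rfl⟩ | ⟨b, rfl⟩)
  · have key : star (star y * α (star a)) = α a * y := by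
      simp [mul_comm, star_star, map_star]
    calc L (α a * y) = L (star (star y * α (star a))) := by rw [key]
      _ = star (L (star y * α (star a))) := hstar _
      _ = star (L (star y) * star a) := by rw [hTrans]
      _ = a * star (L (star y)) := by rw [star_mul, star_star]
      _ = a * L y := by rw [hstar, star_star]
      _ = L (α a) * L y := by rw [hLα]
  · rw [hTrans, hLα]
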